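/- For every positive integer n, the polynomial g_n(x) = Σ_{k=0}^{s} (n-2k)·binom(s,k)·binom(n,k)·x^k, where s = ⌊(n-1)/2⌋, has only real roots. -/

import Mathlib

open Polynomial Finset

lemma splits_derivative (p : ℝ[X]) (hp : p.Splits) :
    (derivative p).Splits := by
  by_cases hd : derivative p = 0
  · rw [hd]; exact Splits.zero
  by_cases hp0 : p.natDegree = 0
  · exact absurd (derivative_of_natDegree_zero hp0) hd
  rw [splits_iff_card_roots] at hp ⊢
  have h1 := p.card_roots_le_derivative
  have h2 := (derivative p).card_roots'
  have h3 : (derivative p).natDegree = p.natDegree - 1 := by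
    have := degree_derivative_eq p (Nat.pos_of_ne_zero hp0)
    exact natDegree_eq_of_degree_eq_some this
  omega

lemma splits_iterate_derivative (m : ℕ) (p : ℝ[X]) (hp : p.Splits) :
    (derivative^[m] p).Splits := by
  induction m with
  | zero => exact hp
  | succ k ih => rw [Function.iterate_succ_apply']; exact splits_derivative _ ih

lemma reflect_one_linear (r : ℝ) : reflect 1 (X - C r) = 1 - C r * X := by
  have h1 : (X : ℝ[X]) = C 1 * X ^ 1 := by simp
  have : reflect 1 (X - C r) = reflect 1 X - reflect 1 (C r) := by
    rw [sub_eq_add_neg, sub_eq_add_neg, ← reflect_neg, reflect_add]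
  rw [this, h1, reflect_C_mul_X_pow, reflect_C]
  simp

lemma splits_reflect (N : ℕ) (q : ℝ[X]) (hq : q.Splits)
    (hdeg : q.natDegree ≤ N) : (reflect N q).Splits := by
  suffices H : ∀ m N (q : ℝ[X]), q.Splits → q.natDegree ≤ N →
      q.natDegree = m → (reflect N q).Splits from
    H q.natDegree N q hq hdeg rfl
  intro m
  induction m with
  | zero =>
    intro N q hq hdeg hn
    obtain ⟨c, rfl⟩ := Polynomial.natDegree_eq_zero.mp hn
    rw [reflect_C]
    exact (Splits.C _).mul (Splits.X.pow _)
  | succ k ih =>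
    intro N q hq hdeg hn
    have hq0 : q ≠ 0 := fun h => by simp [h] at hn
    have hdq : q.degree ≠ 0 := fun h => by
      have : q.natDegree = 0 := natDegree_eq_zero_iff_degree_le_zero.mpr h.le
      omega
    obtain ⟨r, hr⟩ := hq.exists_eval_eq_zero hdq
    have hroot : q.IsRoot r := by simpa using hr
    obtain ⟨q₁, hq1⟩ := (dvd_iff_isRoot.mpr hroot)
    have hX : (X - C r) ≠ (0 : ℝ[X]) := X_sub_C_ne_zero r
    have hq₁0 : q₁ ≠ 0 := fun h => hq0 (by rw [hq1, h, mul_zero])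
    have hdeg1 : q.natDegree = q₁.natDegree + 1 := by
      rw [hq1, natDegree_mul hX hq₁0, natDegree_X_sub_C]; ring
    have hsp : q₁.Splits :=
      Splits.of_dvd (hq1 ▸ hq) (hq1 ▸ hq0) (dvd_mul_left _ _)
    have hN : 1 ≤ N := le_trans (by omega) hdeg
    have hsplit := reflect_mul (X - C r) q₁ (F := 1) (G := N - 1)
      (natDegree_X_sub_C_le r) (by omega)
    rw [show 1 + (N - 1) = N by omega] at hsplit
    rw [hq1, hsplit, reflect_one_linear]
    refine Splits.mul (Splits.of_natDegree_le_one ?_) (ih _ _ hsp (by omega) (by omega))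
    refine le_trans (natDegree_sub_le _ _) (max_le (by simp) ?_)
    exact le_trans (natDegree_mul_le) (by simp)

noncomputable def Mob (d : ℕ) (q : ℝ[X]) : ℝ[X] :=
  ∑ k ∈ range (d + 1), C (q.coeff k) * (X ^ k * (1 - X) ^ (d - k))

lemma Mob_key (d : ℕ) (r : ℝ) (q₁ : ℝ[X]) (hdeg : q₁.natDegree ≤ d) :
    Mob (d + 1) (q₁ * (X - C r)) = (C (1 + r) * X - C r) * Mob d q₁ := by
  unfold Mob
  have e1 : ∀ k, (q₁ * (X - C r)).coeff k
      = (if k = 0 then (0:ℝ) else q₁.coeff (k-1)) - r * q₁.coeff k := by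
    intro k
    cases k with
    | zero => simp [mul_coeff_zero]; ring
    | succ a =>
      rw [coeff_mul_X_sub_C, if_neg (Nat.succ_ne_zero a), Nat.add_sub_cancel]
      ring
  have split : ∑ k ∈ range (d + 1 + 1), C ((q₁ * (X - C r)).coeff k) * (X ^ k * (1 - X) ^ (d + 1 - k))
      = (∑ k ∈ range (d + 1 + 1), C (if k = 0 then (0:ℝ) else q₁.coeff (k-1)) * (X ^ k * (1 - X) ^ (d + 1 - k)))
        - C r * ∑ k ∈ range (d + 1 + 1), C (q₁.coeff k) * (X ^ k * (1 - X) ^ (d + 1 - k)) := by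
    rw [Finset.mul_sum, ← Finset.sum_sub_distrib]
    refine Finset.sum_congr rfl fun k _ => ?_
    rw [e1, map_sub, map_mul]
    ring
  rw [split]
  have S1 : (∑ k ∈ range (d + 1 + 1), C (if k = 0 then (0:ℝ) else q₁.coeff (k-1)) * (X ^ k * (1 - X) ^ (d + 1 - k)))
      = X * ∑ k ∈ range (d + 1), C (q₁.coeff k) * (X ^ k * (1 - X) ^ (d - k)) := by
    rw [Finset.sum_range_succ']
    have h0 : C (if (0:ℕ) = 0 then (0:ℝ) else q₁.coeff (0-1)) * ((X:ℝ[X]) ^ (0:ℕ) * (1 - X) ^ (d + 1 - 0)) = 0 := by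
      simp
    rw [h0, add_zero, Finset.mul_sum]
    refine Finset.sum_congr rfl fun k _ => ?_
    rw [if_neg (Nat.succ_ne_zero k), Nat.add_sub_cancel, Nat.succ_sub_succ, pow_succ']
    ring
  have S2 : (∑ k ∈ range (d + 1 + 1), C (q₁.coeff k) * (X ^ k * (1 - X) ^ (d + 1 - k)))
      = (1 - X) * ∑ k ∈ range (d + 1), C (q₁.coeff k) * (X ^ k * (1 - X) ^ (d - k)) := by
    rw [Finset.sum_range_succ, coeff_eq_zero_of_natDegree_lt (by omega), map_zero, zero_mul,
      add_zero, Finset.mul_sum]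
    refine Finset.sum_congr rfl fun k hk => ?_
    have : d + 1 - k = (d - k) + 1 := by
      have := Finset.mem_range.mp hk; omega
    rw [this, pow_succ]
    ring
  rw [S1, S2, map_add, C_1]
  ring

lemma splits_Mob (d : ℕ) (q : ℝ[X]) (hq : q.Splits)
    (hdeg : q.natDegree ≤ d) : (Mob d q).Splits := by
  suffices H : ∀ m d (q : ℝ[X]), q.Splits → q.natDegree ≤ d →
      q.natDegree = m → (Mob d q).Splits from H q.natDegree d q hq hdeg rfl
  intro m
  induction m with
  | zero =>
    intro d q hq hdeg hn
    obtain ⟨c, rfl⟩ := Polynomial.natDegree_eq_zero.mp hn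
    have : Mob d (C c) = C c * (1 - X) ^ d := by
      unfold Mob
      rw [Finset.sum_eq_single 0]
      · simp
      · intro k _ hk; simp [coeff_C, hk]
      · intro h; exact absurd (Finset.mem_range.mpr (by omega)) h
    rw [this]
    refine (Splits.C _).mul ((Splits.of_natDegree_le_one ?_).pow _)
    exact le_trans (natDegree_sub_le _ _) (by simp)
  | succ k ih =>
    intro d q hq hdeg hn
    have hq0 : q ≠ 0 := fun h => by simp [h] at hn
    have hdq : q.degree ≠ 0 := fun h => by
      have : q.natDegree = 0 := natDegree_eq_zero_iff_degree_le_zero.mpr h.le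
      omega
    obtain ⟨r, hr⟩ := hq.exists_eval_eq_zero hdq
    have hroot : q.IsRoot r := by simpa using hr
    obtain ⟨q₁, hq1⟩ := (dvd_iff_isRoot.mpr hroot)
    rw [mul_comm] at hq1
    have hX : (X - C r) ≠ (0 : ℝ[X]) := X_sub_C_ne_zero r
    have hq₁0 : q₁ ≠ 0 := fun h => hq0 (by rw [hq1, h, zero_mul])
    have hdeg1 : q.natDegree = q₁.natDegree + 1 := by
      rw [hq1, natDegree_mul hq₁0 hX, natDegree_X_sub_C]
    have hsp : q₁.Splits :=
      Splits.of_dvd (hq1 ▸ hq) (hq1 ▸ hq0) (dvd_mul_right _ _)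
    have hd : 1 ≤ d := le_trans (by omega) hdeg
    have key := Mob_key (d - 1) r q₁ (by omega)
    rw [show d - 1 + 1 = d by omega] at key
    rw [hq1, key]
    refine Splits.mul (Splits.of_natDegree_le_one ?_) (ih _ _ hsp (by omega) (by omega))
    refine le_trans (natDegree_sub_le _ _) (max_le ?_ (by simp))
    exact le_trans (natDegree_mul_le) (by simp)

lemma splits_neg_sq_sub_C {r : ℝ} (hr : r < 0) :
    ((-X^2 - C r : ℝ[X])).Splits := by
  set a := Real.sqrt (-r) with hadef
  have ha : a * a = -r := Real.mul_self_sqrt (by linarith)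
  have key : (-X^2 - C r : ℝ[X]) = C (-1) * ((X - C a) * (X + C a)) := by
    have h1 : (C a * C a : ℝ[X]) = C (-r) := by rw [← C_mul, ha]
    have h2 : ((X:ℝ[X]) - C a) * (X + C a) = X^2 - C a * C a := by ring
    rw [h2, h1]
    simp only [map_neg, map_one, C_1]
    ring
  have h3 : ((X:ℝ[X]) + C a) = X - C (-a) := by rw [map_neg]; ring
  rw [key, h3]
  exact (Splits.C _).mul ((Splits.X_sub_C _).mul (Splits.X_sub_C _))

lemma splits_comp_neg_sq_of (q : ℝ[X]) (hq : q.Splits)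
    (hpos : ∀ x : ℝ, 0 ≤ x → q.eval x ≠ 0) :
    (q.comp (-X^2)).Splits := by
  suffices H : ∀ m (q : ℝ[X]), q.Splits → (∀ x : ℝ, 0 ≤ x → q.eval x ≠ 0) →
      q.natDegree = m → (q.comp (-X^2)).Splits from H q.natDegree q hq hpos rfl
  intro m
  induction m with
  | zero =>
    intro q _ _ hn
    obtain ⟨c, rfl⟩ := Polynomial.natDegree_eq_zero.mp hn
    rw [C_comp]
    exact Splits.C _
  | succ k ih =>
    intro q hq hpos hn
    have hq0 : q ≠ 0 := fun h => by simp [h] at hn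
    have hdq : q.degree ≠ 0 := fun h => by
      have : q.natDegree = 0 := natDegree_eq_zero_iff_degree_le_zero.mpr h.le
      omega
    obtain ⟨r, hr⟩ := hq.exists_eval_eq_zero hdq
    have hroot : q.IsRoot r := by simpa using hr
    have hrneg : r < 0 := by
      by_contra h
      exact hpos r (by linarith) hroot
    obtain ⟨q₁, hq1⟩ := (dvd_iff_isRoot.mpr hroot)
    rw [mul_comm] at hq1
    have hX : (X - C r) ≠ (0 : ℝ[X]) := X_sub_C_ne_zero r
    have hq₁0 : q₁ ≠ 0 := fun h => hq0 (by rw [hq1, h, zero_mul])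
    have hdeg1 : q.natDegree = q₁.natDegree + 1 := by
      rw [hq1, natDegree_mul hq₁0 hX, natDegree_X_sub_C]
    have hsp : q₁.Splits :=
      Splits.of_dvd (hq1 ▸ hq) (hq1 ▸ hq0) (dvd_mul_right _ _)
    have hpos1 : ∀ x : ℝ, 0 ≤ x → q₁.eval x ≠ 0 := by
      intro x hx h
      exact hpos x hx (by rw [hq1]; simp [h])
    have hcomp : q.comp (-X^2) = q₁.comp (-X^2) * (-X^2 - C r) := by
      rw [hq1, mul_comp, sub_comp, X_comp, C_comp]
    rw [hcomp]
    exact Splits.mul (ih q₁ hsp hpos1 (by omega)) (splits_neg_sq_sub_C hrneg)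

lemma splits_of_comp_neg_sq (g : ℝ[X])
    (h : (g.comp (-X^2)).Splits) : g.Splits := by
  suffices H : ∀ m (g : ℝ[X]), (g.comp (-X^2)).Splits →
      g.natDegree = m → g.Splits from H g.natDegree g h rfl
  intro m
  induction m with
  | zero => intro g _ hn; exact Splits.of_natDegree_le_one (by omega)
  | succ k ih =>
    intro g hG hn
    have hg0 : g ≠ 0 := fun h => by simp [h] at hn
    have hdX : ((-X^2 : ℝ[X])).natDegree = 2 := by
      rw [natDegree_neg, natDegree_X_pow]
    have hGdeg : (g.comp (-X^2)).natDegree = 2 * (k + 1) := by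
      rw [natDegree_comp, hdX, hn]; ring
    have hG0 : g.comp (-X^2) ≠ 0 := fun h => by rw [h] at hGdeg; simp at hGdeg
    have hdq : (g.comp (-X^2)).degree ≠ 0 := fun h => by
      have : (g.comp (-X^2)).natDegree = 0 := natDegree_eq_zero_iff_degree_le_zero.mpr h.le
      omega
    obtain ⟨w, hw⟩ := hG.exists_eval_eq_zero hdq
    have hweval : g.eval (-w^2) = 0 := by
      have : eval w (g.comp (-X^2)) = 0 := by
        exact hw
      rwa [eval_comp, eval_neg, eval_pow, eval_X] at this
    obtain ⟨g₁, hg1⟩ := (dvd_iff_isRoot.mpr hweval)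
    rw [mul_comm] at hg1
    have hX : (X - C (-w^2)) ≠ (0 : ℝ[X]) := X_sub_C_ne_zero _
    have hg₁0 : g₁ ≠ 0 := fun h => hg0 (by rw [hg1, h, zero_mul])
    have hdeg1 : g.natDegree = g₁.natDegree + 1 := by
      rw [hg1, natDegree_mul hg₁0 hX, natDegree_X_sub_C]
    have hcomp : g.comp (-X^2) = g₁.comp (-X^2) * (-X^2 - C (-w^2)) := by
      rw [hg1, mul_comp, sub_comp, X_comp, C_comp]
    have hsp1 : (g₁.comp (-X^2)).Splits := by
      have := Splits.of_dvd (hcomp ▸ hG) (hcomp ▸ hG0) (dvd_mul_right (g₁.comp (-X^2)) (-X^2 - C (-w^2)))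
      exact this
    have : g₁.Splits := ih g₁ hsp1 (by omega)
    rw [hg1]
    exact this.mul (Splits.X_sub_C _)

lemma pfaff (n s : ℕ) :
    ∑ j ∈ range (s + 1), C ((((n + j).choose j * s.choose j : ℕ)) : ℝ) * (X ^ j * (1 - X) ^ (s - j))
      = ∑ k ∈ range (s + 1), C (((n.choose k * s.choose k : ℕ)) : ℝ) * X ^ k := by
  have vdm : ∀ j : ℕ, ((n + j).choose j : ℝ) = ∑ i ∈ range (j + 1), (n.choose i : ℝ) * (j.choose i : ℝ) := by
    intro j
    have h := Nat.add_choose_eq n j j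
    rw [Finset.Nat.sum_antidiagonal_eq_sum_range_succ_mk] at h
    rw [h]
    push_cast
    refine Finset.sum_congr rfl fun i hi => ?_
    have hij : i ≤ j := by simpa [Nat.lt_succ_iff] using hi
    rw [Nat.choose_symm hij]
  have lhs_eq : ∑ j ∈ range (s + 1), C ((((n + j).choose j * s.choose j : ℕ)) : ℝ) * (X ^ j * (1 - X) ^ (s - j))
      = ∑ j ∈ range (s + 1), ∑ i ∈ range (s + 1),
          C ((n.choose i : ℝ) * (j.choose i : ℝ) * (s.choose j : ℝ)) * (X ^ j * (1 - X) ^ (s - j)) := by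
    refine Finset.sum_congr rfl fun j hj => ?_
    have hjs : j ≤ s := by simpa [Nat.lt_succ_iff] using hj
    have ext : ∑ i ∈ range (s + 1), (n.choose i : ℝ) * (j.choose i : ℝ)
        = ∑ i ∈ range (j + 1), (n.choose i : ℝ) * (j.choose i : ℝ) := by
      symm
      refine Finset.sum_subset (Finset.range_subset_range.mpr (by omega)) fun i hir hi => ?_
      have hji : j < i := by simpa [Nat.lt_succ_iff] using hi
      simp [Nat.choose_eq_zero_of_lt hji]
    calc C (((n + j).choose j * s.choose j : ℕ) : ℝ) * (X ^ j * (1 - X) ^ (s - j))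
        = C (∑ i ∈ range (s + 1), (n.choose i : ℝ) * (j.choose i : ℝ) * (s.choose j : ℝ))
            * (X ^ j * (1 - X) ^ (s - j)) := by
          congr 1
          push_cast
          rw [← Finset.sum_mul, ext, ← vdm j]
      _ = ∑ i ∈ range (s + 1), C ((n.choose i : ℝ) * (j.choose i : ℝ) * (s.choose j : ℝ))
            * (X ^ j * (1 - X) ^ (s - j)) := by
          rw [map_sum, Finset.sum_mul]
  rw [lhs_eq, Finset.sum_comm]
  refine Finset.sum_congr rfl fun i hi => ?_
  have his : i ≤ s := by simpa [Nat.lt_succ_iff] using hi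
  have drop : ∑ j ∈ range (s + 1),
        C ((n.choose i : ℝ) * (j.choose i : ℝ) * (s.choose j : ℝ)) * (X ^ j * (1 - X) ^ (s - j))
      = ∑ j ∈ Finset.Ico i (s + 1),
        C ((n.choose i : ℝ) * (j.choose i : ℝ) * (s.choose j : ℝ)) * (X ^ j * (1 - X) ^ (s - j)) := by
    symm
    refine Finset.sum_subset (fun j hj => ?_) (fun j hjr hj => ?_)
    · simp only [Finset.mem_Ico] at hj; exact Finset.mem_range.mpr hj.2
    · simp only [Finset.mem_Ico, not_and, not_le] at hj
      have hjr' := Finset.mem_range.mp hjr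
      have hji : j < i := by
        rcases Nat.lt_or_ge j i with h | h
        · exact h
        · exact absurd hjr' (hj h)
      simp [Nat.choose_eq_zero_of_lt hji]
  rw [drop, Finset.sum_Ico_eq_sum_range]
  rw [show s + 1 - i = (s - i) + 1 by omega]
  have main : ∑ m ∈ range ((s - i) + 1),
        C ((n.choose i : ℝ) * ((i + m).choose i : ℝ) * (s.choose (i + m) : ℝ))
          * (X ^ (i + m) * (1 - X) ^ (s - (i + m)))
      = C ((n.choose i : ℝ) * (s.choose i : ℝ)) * X ^ i
        * ∑ m ∈ range ((s - i) + 1), C (((s - i).choose m : ℕ) : ℝ) * (X ^ m * (1 - X) ^ ((s - i) - m)) := by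
    rw [Finset.mul_sum]
    refine Finset.sum_congr rfl fun m hm => ?_
    have hm' : m ≤ s - i := by simpa [Nat.lt_succ_iff] using hm
    have rev : s.choose (i + m) * (i + m).choose i = s.choose i * (s - i).choose m := by
      have h := Nat.choose_mul (n := s) (show i ≤ i + m by omega)
      rw [h, show i + m - i = m from by omega]
    have rev' : ((i + m).choose i : ℝ) * (s.choose (i + m) : ℝ)
        = (s.choose i : ℝ) * ((s - i).choose m : ℝ) := by
      rw [mul_comm]; exact_mod_cast rev
    rw [mul_assoc, rev', show s - (i + m) = (s - i) - m from by omega, pow_add]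
    simp only [map_mul]
    ring
  rw [main]
  have binom : ∑ m ∈ range ((s - i) + 1), C (((s - i).choose m : ℕ) : ℝ) * (X ^ m * (1 - X) ^ ((s - i) - m))
      = 1 := by
    have h := add_pow (X : ℝ[X]) (1 - X) (s - i)
    rw [show (X : ℝ[X]) + (1 - X) = 1 by ring, one_pow] at h
    have step : ∑ m ∈ range ((s - i) + 1), C (((s - i).choose m : ℕ) : ℝ) * (X ^ m * (1 - X) ^ ((s - i) - m))
        = ∑ m ∈ range ((s - i) + 1), X ^ m * (1 - X) ^ ((s - i) - m) * ((s - i).choose m : ℝ[X]) := by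
      refine Finset.sum_congr rfl fun m _ => ?_
      rw [C_eq_natCast]
      ring
    rw [step, ← h]
  rw [binom, mul_one]
  push_cast
  ring

-- helper: coefficients of an explicit monomial sum
lemma coeff_msum (N : ℕ) (a : ℕ → ℝ) (i : ℕ) :
    (∑ j ∈ range N, C (a j) * X ^ j).coeff i = if i < N then a i else 0 := by
  rw [finset_sum_coeff]
  simp only [coeff_C_mul, coeff_X_pow]
  by_cases hiN : i < N
  · rw [if_pos hiN, Finset.sum_eq_single i]
    · simp
    · intro b _ hb
      simp [Ne.symm hb]
    · intro h
      exact absurd (Finset.mem_range.mpr hiN) h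
  · rw [if_neg hiN]
    apply Finset.sum_eq_zero
    intro b hb
    have : b < N := Finset.mem_range.mp hb
    simp [show ¬ i = b by omega]

-- helper: reflect of a finite sum
lemma reflect_sum' (N : ℕ) {ι : Type*} (t : Finset ι) (f : ι → ℝ[X]) :
    reflect N (∑ i ∈ t, f i) = ∑ i ∈ t, reflect N (f i) := by
  ext m
  rw [coeff_reflect, finset_sum_coeff, finset_sum_coeff]
  exact Finset.sum_congr rfl fun i _ => (coeff_reflect _ _ _).symm

-- splits cancel constant
lemma splits_of_C_mul {a : ℝ} (ha : a ≠ 0) {p : ℝ[X]}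
    (h : (C a * p).Splits) : p.Splits := by
  rw [splits_iff_card_roots] at h ⊢
  rwa [roots_C_mul _ ha, natDegree_C_mul ha] at h

-- E1 : the iterated derivative
lemma E1 (n s : ℕ) :
    derivative^[n] ((X : ℝ[X]) ^ n * (1 + X) ^ s)
      = ∑ j ∈ range (s + 1), C ((n.factorial * ((n + j).choose j * s.choose j) : ℕ) : ℝ) * X ^ j := by
  have hbin : ((1 : ℝ[X]) + X) ^ s = ∑ j ∈ range (s + 1), C ((s.choose j : ℕ) : ℝ) * X ^ j := by
    have h := add_pow (X : ℝ[X]) 1 s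
    rw [add_comm] at h
    rw [h]
    refine Finset.sum_congr rfl fun j _ => ?_
    rw [C_eq_natCast]
    ring
  have hexp : (X : ℝ[X]) ^ n * (1 + X) ^ s
      = ∑ j ∈ range (s + 1), C ((s.choose j : ℕ) : ℝ) * X ^ (n + j) := by
    rw [hbin, Finset.mul_sum]
    refine Finset.sum_congr rfl fun j _ => ?_
    rw [pow_add]
    ring
  rw [hexp, iterate_derivative_sum]
  refine Finset.sum_congr rfl fun j _ => ?_
  rw [iterate_derivative_C_mul, iterate_derivative_X_pow_eq_natCast_mul,
    show n + j - n = j from by omega]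
  have hdesc : (n + j).descFactorial n = n.factorial * ((n + j).choose j) := by
    have := Nat.descFactorial_eq_factorial_mul_choose (n + j) n
    rw [this, Nat.choose_symm_add]
  rw [hdesc]
  push_cast
  simp only [map_mul, C_eq_natCast]
  push_cast
  ring

theorem stmt6 (n : ℕ) (hn : 1 ≤ n) :
    (∑ k ∈ Finset.range ((n - 1) / 2 + 1),
        Polynomial.C (((n : ℝ) - 2 * k) * ((n - 1) / 2).choose k * n.choose k) *
          Polynomial.X ^ k).Splits := by
  set s := (n - 1) / 2 with hs
  have h2s : 2 * s ≤ n - 1 := by omega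
  have h2s' : 2 * s < n := by omega
  -- step 1 : A splits
  have hA : ((X : ℝ[X]) ^ n * (1 + X) ^ s).Splits := by
    refine (Splits.X.pow _).mul (Splits.pow ?_ _)
    exact Splits.of_natDegree_le_one ((natDegree_add_le _ _).trans (by simp))
  -- step 2 : p splits, explicit form
  have hp : (derivative^[n] ((X : ℝ[X]) ^ n * (1 + X) ^ s)).Splits :=
    splits_iterate_derivative _ _ hA
  rw [E1] at hp
  set p : ℝ[X] := ∑ j ∈ range (s + 1), C ((n.factorial * ((n + j).choose j * s.choose j) : ℕ) : ℝ) * X ^ j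
    with hpdef
  have hpdeg : p.natDegree ≤ s := by
    refine natDegree_sum_le_of_forall_le _ _ fun j hj => ?_
    refine (natDegree_C_mul_le _ _).trans ?_
    rw [natDegree_X_pow]
    exact Nat.lt_succ_iff.mp (Finset.mem_range.mp hj)
  -- step 3 : Mob s p splits and equals C n! * PP
  have hMob : (Mob s p).Splits := splits_Mob s p hp hpdeg
  set PP : ℝ[X] := ∑ k ∈ range (s + 1), C (((n.choose k * s.choose k : ℕ)) : ℝ) * X ^ k with hPP
  have hMobEq : Mob s p = C ((n.factorial : ℕ) : ℝ) * PP := by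
    rw [hPP, ← pfaff n s]
    unfold Mob
    rw [Finset.mul_sum]
    refine Finset.sum_congr rfl fun k hk => ?_
    have hks : k < s + 1 := Finset.mem_range.mp hk
    rw [hpdef, coeff_msum, if_pos hks]
    push_cast
    rw [map_mul (C) _ _]
    ring
  have hPPsplits : PP.Splits := by
    apply splits_of_C_mul (a := ((n.factorial : ℕ) : ℝ)) (by positivity)
    rwa [← hMobEq]
  -- step 4 : positivity of PP on [0,∞)
  have hPPpos : ∀ x : ℝ, 0 ≤ x → PP.eval x ≠ 0 := by
    intro x hx
    have : PP.eval x > 0 := by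
      rw [hPP, eval_finset_sum]
      apply Finset.sum_pos'
      · intro k _
        simp only [eval_mul, eval_C, eval_pow, eval_X]
        positivity
      · refine ⟨0, Finset.mem_range.mpr (by omega), ?_⟩
        simp
    linarith
  -- step 5 : QQ = PP.comp (-X^2) splits, explicit
  have hQQ : (PP.comp (-X^2)).Splits := splits_comp_neg_sq_of PP hPPsplits hPPpos
  set b : ℕ → ℝ := fun k => ((-1 : ℝ)) ^ k * ((n.choose k * s.choose k : ℕ) : ℝ) with hb
  have hQQeq : PP.comp (-X^2) = ∑ k ∈ range (s + 1), C (b k) * X ^ (2 * k) := by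
    rw [hPP, Polynomial.sum_comp]
    refine Finset.sum_congr rfl fun k _ => ?_
    rw [mul_comp, C_comp, pow_comp, X_comp]
    rw [hb, map_mul, map_pow, map_neg, map_one]
    rw [neg_pow, ← pow_mul]
    ring
  rw [hQQeq] at hQQ
  have hQQdeg : (∑ k ∈ range (s + 1), C (b k) * X ^ (2 * k)).natDegree ≤ n := by
    refine natDegree_sum_le_of_forall_le _ _ fun k hk => ?_
    refine (natDegree_C_mul_le _ _).trans ?_
    rw [natDegree_X_pow]
    have := Finset.mem_range.mp hk
    omega
  -- step 6 : reflect n, derivative, reflect (n-1)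
  have hR1 : reflect n (∑ k ∈ range (s + 1), C (b k) * X ^ (2 * k))
      = ∑ k ∈ range (s + 1), C (b k) * X ^ (n - 2 * k) := by
    rw [reflect_sum']
    refine Finset.sum_congr rfl fun k hk => ?_
    have hk' : 2 * k ≤ n := by
      have := Finset.mem_range.mp hk; omega
    rw [reflect_C_mul_X_pow, revAt_le hk']
  have hD1 : derivative (∑ k ∈ range (s + 1), C (b k) * X ^ (n - 2 * k))
      = ∑ k ∈ range (s + 1), C (b k * ((n - 2 * k : ℕ) : ℝ)) * X ^ (n - 2 * k - 1) := by
    rw [derivative_sum]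
    refine Finset.sum_congr rfl fun k _ => ?_
    rw [derivative_C_mul_X_pow]
  have hG1 : reflect (n - 1) (∑ k ∈ range (s + 1), C (b k * ((n - 2 * k : ℕ) : ℝ)) * X ^ (n - 2 * k - 1))
      = ∑ k ∈ range (s + 1), C (b k * ((n - 2 * k : ℕ) : ℝ)) * X ^ (2 * k) := by
    rw [reflect_sum']
    refine Finset.sum_congr rfl fun k hk => ?_
    have hk' : 2 * k ≤ n - 1 := by
      have := Finset.mem_range.mp hk; omega
    rw [reflect_C_mul_X_pow, revAt_le (by omega : n - 2 * k - 1 ≤ n - 1),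
      show n - 1 - (n - 2 * k - 1) = 2 * k from by omega]
  have hGsplits : (∑ k ∈ range (s + 1), C (b k * ((n - 2 * k : ℕ) : ℝ)) * X ^ (2 * k)).Splits := by
    rw [← hG1]
    apply splits_reflect
    · rw [← hD1]
      apply splits_derivative
      rw [← hR1]
      exact splits_reflect _ _ hQQ hQQdeg
    · refine natDegree_sum_le_of_forall_le _ _ fun k hk => ?_
      refine (natDegree_C_mul_le _ _).trans ?_
      rw [natDegree_X_pow]
      omega
  -- step 7 : final identification
  set g : ℝ[X] := ∑ k ∈ Finset.range (s + 1),
      C (((n : ℝ) - 2 * k) * (s.choose k) * (n.choose k)) * X ^ k with hg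
  have hgcomp : g.comp (-X^2) = ∑ k ∈ range (s + 1), C (b k * ((n - 2 * k : ℕ) : ℝ)) * X ^ (2 * k) := by
    rw [hg, Polynomial.sum_comp]
    refine Finset.sum_congr rfl fun k hk => ?_
    have hk' : 2 * k ≤ n := by
      have := Finset.mem_range.mp hk; omega
    rw [mul_comp, C_comp, pow_comp, X_comp, neg_pow, ← pow_mul]
    rw [show ((-1 : ℝ[X])) ^ k = C ((-1 : ℝ) ^ k) from by rw [map_pow, map_neg, map_one]]
    rw [← mul_assoc, ← map_mul]
    have hsc : ((n : ℝ) - 2 * k) * ((s.choose k : ℕ) : ℝ) * ((n.choose k : ℕ) : ℝ) * (-1 : ℝ) ^ k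
        = b k * ((n - 2 * k : ℕ) : ℝ) := by
      rw [hb]
      push_cast [Nat.cast_sub hk']
      ring
    rw [hsc]
  exact splits_of_comp_neg_sq g (by rw [hgcomp]; exact hGsplits)
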